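/- Let X be a set with a ℚ^{≥0}-valued ultrametric d. Assume: (i) X is iso-homogeneous, i.e., for every finite A ⊆ X and every injective map q : A → X with d(q(x), q(y)) = d(x, y) for all x, y ∈ A there is a bijection G : X → X extending q with d(G(x), G(y)) = d(x, y) for all x, y ∈ X; and (ii) for every order automorphism h of ℚ^{≥0} there exists a bijection F : X → X with d(F(x), F(y)) = h(d(x, y)) for all x, y ∈ X. Then X is dc-homogeneous: for every finite A ⊆ X, every injective map p : A → X, and every order automorphism h of ℚ^{≥0} with d(p(x), p(y)) = h(d(x, y)) for all x, y ∈ A, there is a bijection g : X → X extending p with d(g(x), g(y)) = h(d(x, y)) for all x, y ∈ X. -/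
import Mathlib


open scoped NNRat

/-- A `ℚ≥0`-valued ultrametric on `X`. -/
def IsQUltra {X : Type*} (d : X → X → ℚ≥0) : Prop :=
  (∀ x y, d x y = 0 ↔ x = y) ∧ (∀ x y, d x y = d y x) ∧
  (∀ x y z, d x z ≤ max (d x y) (d y z))

/-- If a `ℚ≥0`-valued ultrametric space is iso-homogeneous and every order
automorphism of `ℚ≥0` is realized by some global bijection scaling distances by it,
then the space is dc-homogeneous. -/
theorem stmt18 {X : Type*} (d : X → X → ℚ≥0) (hd : IsQUltra d)
    (hiso : ∀ A : Set X, A.Finite → ∀ q : X → X, Set.InjOn q A →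
      (∀ x ∈ A, ∀ y ∈ A, d (q x) (q y) = d x y) →
      ∃ G : X → X, Function.Bijective G ∧ (∀ x ∈ A, G x = q x) ∧
        ∀ x y : X, d (G x) (G y) = d x y)
    (hproj : ∀ h : ℚ≥0 ≃o ℚ≥0, ∃ F : X → X, Function.Bijective F ∧
      ∀ x y : X, d (F x) (F y) = h (d x y)) :
    ∀ A : Set X, A.Finite → ∀ p : X → X, Set.InjOn p A →
      ∀ h : ℚ≥0 ≃o ℚ≥0, (∀ x ∈ A, ∀ y ∈ A, d (p x) (p y) = h (d x y)) →
      ∃ g : X → X, Function.Bijective g ∧ (∀ x ∈ A, g x = p x) ∧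
        ∀ x y : X, d (g x) (g y) = h (d x y) := by
  intro A hA p hp h hph
  cases isEmpty_or_nonempty X with
  | inl hE =>
    exact ⟨id, Function.bijective_id, fun x _ => (hE.false x).elim,
      fun x => (hE.false x).elim⟩
  | inr hN =>
    obtain ⟨F, hFbij, hF⟩ := hproj h
    set q : X → X := p ∘ Function.invFun F with hq
    have hinv : ∀ a : X, Function.invFun F (F a) = a :=
      fun a => Function.leftInverse_invFun hFbij.injective a
    have hqF : ∀ a, q (F a) = p a := fun a => by simp [hq, hinv a]
    have hinj : Set.InjOn q (F '' A) := by
      rintro _ ⟨a, ha, rfl⟩ _ ⟨b, hb, rfl⟩ hab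
      rw [hqF, hqF] at hab
      exact congrArg F (hp ha hb hab)
    have hqiso : ∀ x ∈ F '' A, ∀ y ∈ F '' A, d (q x) (q y) = d x y := by
      rintro _ ⟨a, ha, rfl⟩ _ ⟨b, hb, rfl⟩
      rw [hqF, hqF, hph a ha b hb, hF]
    obtain ⟨G, hGbij, hGq, hGiso⟩ := hiso (F '' A) (hA.image F) q hinj hqiso
    refine ⟨G ∘ F, hGbij.comp hFbij, fun a ha => ?_, fun x y => ?_⟩
    · rw [Function.comp_apply, hGq (F a) ⟨a, ha, rfl⟩, hqF]
    · simp [hGiso, hF]
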